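/- Let q be a regular critical weight sequence, μ = μ^q, and let m_1 be the mean of μ_1. There exists a constant β_1 > 0 such that for every sufficiently large n, P_μ( |#T⁰ − m_1 n| > n^{3/4} and #T¹ = n ) ≤ exp(−n^{β_1}). -/

import Mathlib

open MeasureTheory Filter Topology
open scoped Classical

noncomputable section

namespace PaperWeill

/-! ### Plane trees, coded as finite sets of words over `ℕ = {1,2,…}` -/

/-- The number of children `k_u(T)` of the vertex `u` in the finite set of words `T`. -/
def childCount (T : Finset (List ℕ)) (u : List ℕ) : ℕ :=
  (T.filter fun v => v ≠ [] ∧ v.dropLast = u).card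

/-- `T` is a plane tree: it contains the root, is stable under taking fathers, uses only
letters `≥ 1`, and the children of `u` are exactly `u1, …, u k_u(T)`. -/
def IsPlaneTree (T : Finset (List ℕ)) : Prop :=
  [] ∈ T ∧ (∀ (u : List ℕ) (j : ℕ), u ++ [j] ∈ T → u ∈ T) ∧
    (∀ v ∈ T, ∀ i ∈ v, 1 ≤ i) ∧
    ∀ u ∈ T, ∀ j : ℕ, (u ++ [j] ∈ T ↔ 1 ≤ j ∧ j ≤ childCount T u)

/-- Vertices of type 0 (even generation). -/
def type0 (T : Finset (List ℕ)) : Finset (List ℕ) := T.filter fun v => Even v.length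

/-- Vertices of type 1 (odd generation). -/
def type1 (T : Finset (List ℕ)) : Finset (List ℕ) := T.filter fun v => ¬ Even v.length

/-- `#T¹`. -/
def t1card (T : Finset (List ℕ)) : ℕ := (type1 T).card

/-- The `P_μ`-weight of an individual plane tree. -/
def treeWt (μ₀ μ₁ : ℕ → ℝ) (T : Finset (List ℕ)) : ℝ :=
  ∏ u ∈ T, if Even u.length then μ₀ (childCount T u) else μ₁ (childCount T u)

/-- `P_μ(E)`, the probability of an event `E` under the two-type Galton-Watson law. -/
def tP (μ₀ μ₁ : ℕ → ℝ) (E : Finset (List ℕ) → Prop) : ℝ :=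
  ∑' T : Finset (List ℕ), if IsPlaneTree T ∧ E T then treeWt μ₀ μ₁ T else 0

/-- conditional probability `P_μ(E ∣ F)`. -/
def tCond (μ₀ μ₁ : ℕ → ℝ) (E F : Finset (List ℕ) → Prop) : ℝ :=
  tP μ₀ μ₁ (fun T => E T ∧ F T) / tP μ₀ μ₁ F

/-! ### Regular critical weight sequences -/

/-- `N(k) = C(2k-1, k-1)`. -/
def Ncoef (k : ℕ) : ℕ := (2 * k - 1).choose (k - 1)

/-- `f_q(x) = Σ_k N(k+1) q_{k+1} x^k`. -/
def fq (q : ℕ → ℝ) (x : ℝ) : ℝ := ∑' k : ℕ, (Ncoef (k + 1) : ℝ) * q (k + 1) * x ^ k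

/-- The derivative series `f_q'(x) = Σ_k k N(k+1) q_{k+1} x^{k-1}`. -/
def fq' (q : ℕ → ℝ) (x : ℝ) : ℝ :=
  ∑' k : ℕ, (k : ℝ) * (Ncoef (k + 1) : ℝ) * q (k + 1) * x ^ (k - 1)

/-- `q` is a regular critical weight sequence with distinguished solution `Z = Z_q`. -/
structure RegCrit (q : ℕ → ℝ) (Z : ℝ) : Prop where
  nonneg : ∀ i, 0 ≤ q i
  some_pos : ∃ i, 2 ≤ i ∧ 0 < q i
  Zpos : 0 < Z
  fixedPoint : fq q Z = 1 - 1 / Z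
  critical : Z ^ 2 * fq' q Z = 1
  regular : ∃ R, Z < R ∧ Summable fun k : ℕ => (Ncoef (k + 1) : ℝ) * q (k + 1) * R ^ k

/-- `μ₀^q`, the geometric distribution with parameter `f_q(Z_q)`. -/
def mu0 (q : ℕ → ℝ) (Z : ℝ) (k : ℕ) : ℝ := Z⁻¹ * fq q Z ^ k

/-- `μ₁^q(k) = Z^k N(k+1) q_{k+1} / f_q(Z)`. -/
def mu1 (q : ℕ → ℝ) (Z : ℝ) (k : ℕ) : ℝ := Z ^ k * (Ncoef (k + 1) : ℝ) * q (k + 1) / fq q Z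

/-- The mean `m₁` of `μ₁^q`. -/
def meanMu1 (q : ℕ → ℝ) (Z : ℝ) : ℝ := ∑' k : ℕ, (k : ℝ) * mu1 q Z k

/-! ### Spatial trees -/

/-- `(x_1,…,x_k) ∈ A_k`. -/
def vecInA (k : ℕ) (x : ℕ → ℤ) : Prop :=
  1 ≤ k → (-1 ≤ x 1 ∧ x k ≤ 1 ∧ ∀ j : ℕ, 1 ≤ j → j < k → -1 ≤ x (j + 1) - x j)

/-- Admissibility of the displacement field `D` on the tree `T` (`D v = U_v - U_{v̌}`):
children of type-0 vertices get displacement `0` (the Dirac mass `ν₀`), and around each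
type-1 vertex the displacement vector lies in `A_k` (uniform law `ν₁^k`), or in its
reversal if `rev = true` (law `ν̃₁^k`). -/
def dispOK (rev : Bool) (T : Finset (List ℕ)) (D : List ℕ →₀ ℤ) : Prop :=
  (∀ v : List ℕ, D v ≠ 0 → v ∈ T ∧ v ≠ [] ∧ ¬ Even v.dropLast.length) ∧
    ∀ u ∈ T, ¬ Even u.length →
      vecInA (childCount T u)
        fun j => if rev then D (u ++ [childCount T u + 1 - j]) else D (u ++ [j])

/-- The `ℙ_{μ,ν,x}`-weight of an individual spatial tree `(T, D)`. -/
def spatialWt (μ₀ μ₁ : ℕ → ℝ) (rev : Bool) (T : Finset (List ℕ)) (D : List ℕ →₀ ℤ) : ℝ :=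
  if IsPlaneTree T ∧ dispOK rev T D then
    treeWt μ₀ μ₁ T * ∏ u ∈ type1 T, ((Ncoef (childCount T u + 1) : ℝ))⁻¹
  else 0

/-- The label function determined by the initial value `x` and the displacements `D`. -/
def labelOf (x : ℝ) (D : List ℕ →₀ ℤ) (v : List ℕ) : ℝ :=
  x + ∑ i ∈ Finset.range v.length, ((D (v.take (i + 1)) : ℤ) : ℝ)

/-- Expectation `𝔼_{μ,ν,x}[F(T,U)]` (with `ν̃` in place of `ν` if `rev = true`). -/
def sE (μ₀ μ₁ : ℕ → ℝ) (rev : Bool) (x : ℝ)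
    (F : Finset (List ℕ) → (List ℕ → ℝ) → ℝ) : ℝ :=
  ∑' p : Finset (List ℕ) × (List ℕ →₀ ℤ),
    F p.1 (labelOf x p.2) * spatialWt μ₀ μ₁ rev p.1 p.2

/-- `ℙ_{μ,ν,x}(E)`. -/
def sP (μ₀ μ₁ : ℕ → ℝ) (rev : Bool) (x : ℝ)
    (E : Finset (List ℕ) → (List ℕ → ℝ) → Prop) : ℝ :=
  sE μ₀ μ₁ rev x fun T U => if E T U then 1 else 0

/-- Conditional expectation `𝔼_{μ,ν,x}[F ∣ G]`. -/
def sCondE (μ₀ μ₁ : ℕ → ℝ) (rev : Bool) (x : ℝ)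
    (F : Finset (List ℕ) → (List ℕ → ℝ) → ℝ)
    (G : Finset (List ℕ) → (List ℕ → ℝ) → Prop) : ℝ :=
  sE μ₀ μ₁ rev x (fun T U => if G T U then F T U else 0) / sP μ₀ μ₁ rev x G

/-- Conditional probability `ℙ_{μ,ν,x}(E ∣ G)`. -/
def sCondP (μ₀ μ₁ : ℕ → ℝ) (rev : Bool) (x : ℝ)
    (E G : Finset (List ℕ) → (List ℕ → ℝ) → Prop) : ℝ :=
  sP μ₀ μ₁ rev x (fun T U => E T U ∧ G T U) / sP μ₀ μ₁ rev x G

/-! ### Distinguished vertices -/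

/-- `∂₀T`, the type-0 leaves of `T`. -/
def leaves0 (T : Finset (List ℕ)) : Finset (List ℕ) :=
  T.filter fun v => Even v.length ∧ childCount T v = 0

/-- `min{U_w : w ∈ T}`. -/
def minLabel (T : Finset (List ℕ)) (U : List ℕ → ℝ) : ℝ := sInf (U '' ↑T)

/-- `Δ₀`, the set of type-0 vertices with minimal label. -/
def Delta0 (T : Finset (List ℕ)) (U : List ℕ → ℝ) : Finset (List ℕ) :=
  T.filter fun v => Even v.length ∧ U v = minLabel T U

/-- Strict lexicographical order on words. -/
def lexLt (u v : List ℕ) : Prop := List.Lex (· < ·) u v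

/-- `v` is the first element of `Δ₀` in lexicographical order. -/
def IsFirstMin (T : Finset (List ℕ)) (U : List ℕ → ℝ) (v : List ℕ) : Prop :=
  v ∈ Delta0 T U ∧ ∀ w ∈ Delta0 T U, w ≠ v → lexLt v w

/-- `v_m`, the first element of `Δ₀` in lexicographical order. -/
def vmin (T : Finset (List ℕ)) (U : List ℕ → ℝ) : List ℕ :=
  if h : ∃ v, IsFirstMin T U v then h.choose else []

/-- `U̲ > 0` : all labels of type-0 vertices other than the root are positive
(vacuously true if there are none, following the convention `min ∅ = ∞`). -/
def UnderbarPos (T : Finset (List ℕ)) (U : List ℕ → ℝ) : Prop :=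
  ∀ v ∈ T, v ≠ [] → Even v.length → 0 < U v

/-- `U̲ ≥ 0`. -/
def UnderbarNonneg (T : Finset (List ℕ)) (U : List ℕ → ℝ) : Prop :=
  ∀ v ∈ T, v ≠ [] → Even v.length → 0 ≤ U v

/-! ### Contour function and re-rooting -/

/-- One step of the contour walk: from `cur`, having arrived from `prev`. -/
def cnext (T : Finset (List ℕ)) (prev cur : List ℕ) : List ℕ :=
  if prev.length = cur.length + 1 then
    if prev.getLastD 0 < childCount T cur then cur ++ [prev.getLastD 0 + 1] else cur.dropLast
  else if 1 ≤ childCount T cur then cur ++ [1] else cur.dropLast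

/-- The search-depth sequence `u_0, u_1, …, u_{2ζ}` of `T`. -/
def contourSeq (T : Finset (List ℕ)) : List (List ℕ) :=
  ((List.range (2 * T.card - 2)).foldl
    (fun acc _ => cnext T (acc.tail.headD (acc.headD [])) (acc.headD []) :: acc) [[]]).reverse

/-- The contour function of `T` at integer times. -/
def contourHt (T : Finset (List ℕ)) (i : ℕ) : ℤ := (((contourSeq T).getD i []).length : ℤ)

/-- `[[k - t]]`, the representative modulo `2ζ` in `[0, 2ζ)`, where `k` is the time of the
first visit of `v₀`. -/
def wrapIdx (T : Finset (List ℕ)) (v₀ : List ℕ) (t : ℕ) : ℕ :=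
  ((((contourSeq T).idxOf v₀ : ℤ) - (t : ℤ)) % (((contourSeq T).length : ℤ) - 1)).toNat

/-- The re-rooted contour function
`Ĉ^{(v₀)}(t) = C(k) + C([[k-t]]) - 2 inf_{s} C(s)`. -/
def Chat (T : Finset (List ℕ)) (v₀ : List ℕ) (t : ℕ) : ℤ :=
  let k := (contourSeq T).idxOf v₀
  let m := wrapIdx T v₀ t
  contourHt T k + contourHt T m -
    2 * (Finset.Icc (min k m) (max k m)).inf' (Finset.nonempty_Icc.mpr min_le_max) (contourHt T)

/-- `2ζ - (l - k)`, the length of the time interval of the re-rooted contour. -/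
def rerootLen (T : Finset (List ℕ)) (v₀ : List ℕ) : ℕ :=
  let cs := contourSeq T
  (cs.length - 1) - ((cs.length - 1 - cs.reverse.idxOf v₀) - cs.idxOf v₀)

/-- The successive heights `Ĉ^{(v₀)}(1), …, Ĉ^{(v₀)}(2ζ - (l-k))` of the re-rooted contour. -/
def rerootHeights (T : Finset (List ℕ)) (v₀ : List ℕ) : List ℕ :=
  (List.range (rerootLen T v₀)).map fun t => (Chat T v₀ (t + 1)).toNat

/-- One step of the reconstruction of a plane tree from the list of heights of its contour
function; the state is (current vertex, vertices built so far, visit sequence so far). -/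
def buildStep (st : List ℕ × Finset (List ℕ) × List (List ℕ)) (h : ℕ) :
    List ℕ × Finset (List ℕ) × List (List ℕ) :=
  if h = st.1.length + 1 then
    (st.1 ++ [childCount st.2.1 st.1 + 1],
      insert (st.1 ++ [childCount st.2.1 st.1 + 1]) st.2.1,
      st.2.2 ++ [st.1 ++ [childCount st.2.1 st.1 + 1]])
  else (st.1.dropLast, st.2.1, st.2.2 ++ [st.1.dropLast])

/-- The re-rooted tree `T̂^{(v₀)}`: the unique plane tree whose contour function is
`Ĉ^{(v₀)}`, reconstructed from its list of heights. -/
def reroot (T : Finset (List ℕ)) (v₀ : List ℕ) : Finset (List ℕ) :=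
  ((rerootHeights T v₀).foldl buildStep ([], {[]}, [[]])).2.1

/-- The search-depth sequence of the re-rooted tree `T̂^{(v₀)}`. -/
def rerootVisits (T : Finset (List ℕ)) (v₀ : List ℕ) : List (List ℕ) :=
  ((rerootHeights T v₀).foldl buildStep ([], {[]}, [[]])).2.2

/-- The re-rooted labels `Û^{(v₀)}` : for `v` of type 0, `Û^{(v₀)}_v = U_{v̄} - U_{v₀}` where
`v̄` is the vertex of `T` corresponding to `v`, and `Û^{(v₀)}_v = Û^{(v₀)}_{v̌}` for `v` of
type 1. -/
def rerootLabel (T : Finset (List ℕ)) (U : List ℕ → ℝ) (v₀ v : List ℕ) : ℝ :=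
  let w := if Even v.length then v else v.dropLast
  U ((contourSeq T).getD (wrapIdx T v₀ ((rerootVisits T v₀).idxOf w)) []) - U v₀

/-- `T^{(w₀)}`, the tree `T` with the strict descendants of `w₀` removed. -/
def truncateAt (T : Finset (List ℕ)) (w₀ : List ℕ) : Finset (List ℕ) :=
  T.filter fun v => ¬(w₀ <+: v ∧ v ≠ w₀)

/-! ### The processes `J` and `K` -/

/-- `J_T(n)`, the number of type-0 vertices among the `n+1` lexicographically first
vertices of `T`. -/
def Jfun (T : Finset (List ℕ)) (n : ℕ) : ℕ :=
  (T.filter fun v => Even v.length ∧ (T.filter fun w => lexLt w v).card ≤ n).card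

/-- `J̄_T(t) = J_T(ζ t) / #T⁰`. -/
def Jbar (T : Finset (List ℕ)) (t : ℝ) : ℝ :=
  (Jfun T ⌊((T.card - 1 : ℕ) : ℝ) * t⌋₊ : ℝ) / ((type0 T).card : ℝ)

/-- The contour function at integer times, with values in `ℕ`. -/
def Cfn (T : Finset (List ℕ)) (l : ℕ) : ℕ := ((contourSeq T).getD l []).length

/-- `K_T(k) = 1 + #{l ∈ {1,…,k} : C(l) = max_{[l-1,l]} C and C(l) even}`. -/
def Kfun (T : Finset (List ℕ)) (k : ℕ) : ℕ :=
  1 + ((Finset.Icc 1 k).filter fun l => Cfn T (l - 1) ≤ Cfn T l ∧ Even (Cfn T l)).card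

/-- `K̄_T(t) = K_T(2ζ t) / #T⁰`. -/
def Kbar (T : Finset (List ℕ)) (t : ℝ) : ℝ :=
  (Kfun T ⌊((2 * (T.card - 1) : ℕ) : ℝ) * t⌋₊ : ℝ) / ((type0 T).card : ℝ)


/-! ### Auxiliary lemmas -/

/-- subtree rooted at child j -/
def subAt (j : ℕ) (T : Finset (List ℕ)) : Finset (List ℕ) :=
  (T.filter fun v => v.head? = some j).image List.tail

lemma mem_subAt {j : ℕ} {T : Finset (List ℕ)} {w : List ℕ} :
    w ∈ subAt j T ↔ j :: w ∈ T := by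
  simp only [subAt, Finset.mem_image, Finset.mem_filter]
  constructor
  · rintro ⟨v, ⟨hv, hh⟩, rfl⟩
    cases v with
    | nil => simp at hh
    | cons a l => simp only [List.head?_cons, Option.some_inj] at hh; subst hh; exact hv
  · intro h; exact ⟨j :: w, ⟨h, rfl⟩, rfl⟩

lemma dropLast_cons_of_ne_nil {a : ℕ} {l : List ℕ} (h : l ≠ []) :
    (a :: l).dropLast = a :: l.dropLast := by
  cases l with
  | nil => simp at h
  | cons b m => rfl

lemma childCount_subAt (j : ℕ) (T : Finset (List ℕ)) (w : List ℕ) :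
    childCount (subAt j T) w = childCount T (j :: w) := by
  unfold childCount
  apply Finset.card_nbij (fun l => j :: l)
  · intro l hl
    simp only [Finset.mem_coe, Finset.mem_filter] at hl ⊢
    obtain ⟨hmem, hne, hd⟩ := hl
    exact ⟨mem_subAt.mp hmem, by simp, by rw [dropLast_cons_of_ne_nil hne, hd]⟩
  · intro a _ b _ h; simpa using h
  · rintro v hv
    simp only [Finset.coe_filter, Set.mem_setOf_eq] at hv
    obtain ⟨hmem, hne, hd⟩ := hv
    have hv' : v = (j :: w) ++ [v.getLast hne] := by
      conv_lhs => rw [← List.dropLast_append_getLast hne]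
      rw [hd]
    refine ⟨w ++ [v.getLast hne], ?_, ?_⟩
    · simp only [Finset.coe_filter, Set.mem_setOf_eq]
      refine ⟨mem_subAt.mpr ?_, by simp, List.dropLast_concat⟩
      have : j :: (w ++ [v.getLast hne]) = v := hv'.symm
      rw [this]; exact hmem
    · exact hv'.symm

/-- all prefixes of members are members -/
lemma prefix_mem {T : Finset (List ℕ)} (hT : IsPlaneTree T) :
    ∀ v ∈ T, ∀ u, u <+: v → u ∈ T := by
  intro v hv
  induction v using List.reverseRecOn with
  | nil => intro u hu; rw [List.prefix_nil.mp hu]; exact hT.1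
  | append_singleton l a ih =>
    intro u hu
    rcases List.prefix_concat_iff.mp hu with h | h
    · subst h; exact hv
    · exact ih (hT.2.1 l a hv) u h

lemma childCount_root {T : Finset (List ℕ)} (hT : IsPlaneTree T) {v : List ℕ}
    (hv : v ∈ T) (hne : v ≠ []) : ∃ j l, v = j :: l ∧ 1 ≤ j ∧ j ≤ childCount T [] := by
  cases v with
  | nil => exact absurd rfl hne
  | cons j l =>
    refine ⟨j, l, rfl, ?_⟩
    have h1 : [j] ∈ T := prefix_mem hT _ hv [j] ⟨l, rfl⟩
    have := (hT.2.2.2 [] hT.1 j).mp (by simpa using h1)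
    exact this

/-- decomposition of a plane tree -/
lemma tree_eq_cover {T : Finset (List ℕ)} (hT : IsPlaneTree T) :
    T = insert [] ((Finset.Icc 1 (childCount T [])).biUnion
      fun j => (subAt j T).image (j :: ·)) := by
  ext v
  simp only [Finset.mem_insert, Finset.mem_biUnion, Finset.mem_Icc, Finset.mem_image]
  constructor
  · intro hv
    by_cases hne : v = []
    · left; exact hne
    · right
      obtain ⟨j, l, rfl, h1, h2⟩ := childCount_root hT hv hne
      exact ⟨j, ⟨h1, h2⟩, l, mem_subAt.mpr hv, rfl⟩
  · rintro (rfl | ⟨j, _, l, hl, rfl⟩)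
    · exact hT.1
    · exact mem_subAt.mp hl

lemma subAt_planeTree {T : Finset (List ℕ)} (hT : IsPlaneTree T) {j : ℕ}
    (h1 : 1 ≤ j) (h2 : j ≤ childCount T []) : IsPlaneTree (subAt j T) := by
  have hj : [j] ∈ T := (hT.2.2.2 [] hT.1 j).mpr ⟨h1, h2⟩
  refine ⟨mem_subAt.mpr (by simpa using hj), ?_, ?_, ?_⟩
  · intro u i h
    have : (j :: u) ++ [i] ∈ T := by simpa using mem_subAt.mp h
    exact mem_subAt.mpr (hT.2.1 _ _ this)
  · intro v hv i hi
    exact hT.2.2.1 (j :: v) (mem_subAt.mp hv) i (List.mem_cons_of_mem _ hi)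
  · intro u hu i
    rw [childCount_subAt]
    have := hT.2.2.2 (j :: u) (mem_subAt.mp hu) i
    constructor
    · intro h
      exact this.mp (by simpa using mem_subAt.mp h)
    · intro h
      exact mem_subAt.mpr (by simpa using this.mpr h)


lemma treeWt_nonneg {p₀ p₁ : ℕ → ℝ} (h₀ : ∀ k, 0 ≤ p₀ k) (h₁ : ∀ k, 0 ≤ p₁ k)
    (T : Finset (List ℕ)) : 0 ≤ treeWt p₀ p₁ T := by
  apply Finset.prod_nonneg
  intro u _
  by_cases h : Even u.length <;> simp [h, h₀, h₁]

lemma treeWt_factor (p₀ p₁ : ℕ → ℝ) {T : Finset (List ℕ)} (hT : IsPlaneTree T) :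
    treeWt p₀ p₁ T = p₀ (childCount T []) *
      ∏ j ∈ Finset.Icc 1 (childCount T []), treeWt p₁ p₀ (subAt j T) := by
  set k := childCount T []
  have hcover := tree_eq_cover hT
  have hnotmem : ([] : List ℕ) ∉ (Finset.Icc 1 k).biUnion
      (fun j => (subAt j T).image (j :: ·)) := by
    simp only [Finset.mem_biUnion, Finset.mem_image, not_exists]
    rintro j ⟨hj, l, hl, h⟩
    exact List.cons_ne_nil _ _ h
  have hdisj : ∀ j₁ ∈ Finset.Icc 1 k, ∀ j₂ ∈ Finset.Icc 1 k, j₁ ≠ j₂ →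
      Disjoint ((subAt j₁ T).image (j₁ :: ·)) ((subAt j₂ T).image (j₂ :: ·)) := by
    intro j₁ _ j₂ _ hne
    simp only [Finset.disjoint_left, Finset.mem_image]
    rintro v ⟨l, _, rfl⟩ ⟨l', _, h⟩
    exact hne (by injection h.symm)
  unfold treeWt
  rw [show (∏ u ∈ T, if Even u.length then p₀ (childCount T u) else p₁ (childCount T u))
      = ∏ u ∈ insert [] ((Finset.Icc 1 k).biUnion fun j => (subAt j T).image (j :: ·)),
        (if Even u.length then p₀ (childCount T u) else p₁ (childCount T u)) from by
    rw [← hcover]]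
  rw [Finset.prod_insert hnotmem, Finset.prod_biUnion hdisj]
  simp only [List.length_nil, Even.zero, if_pos]
  congr 1
  apply Finset.prod_congr rfl
  intro j _
  rw [Finset.prod_image (by intro a _ b _ h; injection h)]
  apply Finset.prod_congr rfl
  intro w _
  rw [← childCount_subAt]
  simp only [List.length_cons, Nat.even_add_one]
  by_cases h : Even w.length <;> simp [h]

lemma prod_Icc_one (k : ℕ) (f : ℕ → ℝ) :
    ∏ j ∈ Finset.Icc 1 k, f j = ∏ i : Fin k, f (i + 1) := by
  rw [Fin.prod_univ_eq_prod_range (fun i => f (i + 1)) k]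
  rw [← Finset.Ico_add_one_right_eq_Icc, Finset.prod_Ico_eq_prod_range]
  simp [Nat.add_comm]

/-- Key sub-probability estimate: partial sums of GW-weights over plane trees are ≤ 1. -/
lemma gw_partial_sum_le : ∀ h : ℕ, ∀ p₀ p₁ : ℕ → ℝ, (∀ k, 0 ≤ p₀ k) → (∀ k, 0 ≤ p₁ k) →
    (∀ F : Finset ℕ, ∑ k ∈ F, p₀ k ≤ 1) → (∀ F : Finset ℕ, ∑ k ∈ F, p₁ k ≤ 1) →
    ∀ S : Finset (Finset (List ℕ)),
      (∀ T ∈ S, IsPlaneTree T ∧ ∀ v ∈ T, v.length ≤ h) →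
      ∑ T ∈ S, treeWt p₀ p₁ T ≤ 1 := by
  intro h
  induction h with
  | zero =>
    intro p₀ p₁ h₀ h₁ s₀ s₁ S hS
    have hsub : S ⊆ {({[]} : Finset (List ℕ))} := by
      intro T hT
      obtain ⟨hpt, hd⟩ := hS T hT
      simp only [Finset.mem_singleton]
      apply Finset.Subset.antisymm
      · intro v hv
        have := hd v hv
        have : v = [] := by cases v with | nil => rfl | cons a l => simp at this
        simp [this]
      · intro v hv; simp only [Finset.mem_singleton] at hv; subst hv; exact hpt.1
    calc ∑ T ∈ S, treeWt p₀ p₁ T ≤ ∑ T ∈ {({[]} : Finset (List ℕ))}, treeWt p₀ p₁ T := by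
          apply Finset.sum_le_sum_of_subset_of_nonneg hsub
          intro T _ _; exact treeWt_nonneg h₀ h₁ T
      _ = p₀ (childCount {[]} []) := by
          simp [treeWt]
      _ ≤ 1 := by
          have := s₀ {childCount ({[]} : Finset (List ℕ)) []}
          simpa using this
  | succ h ih =>
    intro p₀ p₁ h₀ h₁ s₀ s₁ S hS
    set F : Finset (Finset (List ℕ)) :=
      S.biUnion (fun T => (Finset.Icc 1 (childCount T [])).image (fun j => subAt j T)) with hF
    have hFgood : ∀ t ∈ F, IsPlaneTree t ∧ ∀ v ∈ t, v.length ≤ h := by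
      intro t ht
      simp only [hF, Finset.mem_biUnion, Finset.mem_image, Finset.mem_Icc] at ht
      obtain ⟨T, hT, j, ⟨hj1, hj2⟩, rfl⟩ := ht
      obtain ⟨hpt, hd⟩ := hS T hT
      refine ⟨subAt_planeTree hpt hj1 hj2, ?_⟩
      intro v hv
      have := hd (j :: v) (mem_subAt.mp hv)
      simpa using this
    have hc : ∑ t ∈ F, treeWt p₁ p₀ t ≤ 1 := ih p₁ p₀ h₁ h₀ s₁ s₀ F hFgood
    have hc0 : 0 ≤ ∑ t ∈ F, treeWt p₁ p₀ t :=
      Finset.sum_nonneg fun t _ => treeWt_nonneg h₁ h₀ t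
    -- fiberwise over k = childCount T []
    rw [← Finset.sum_fiberwise_of_maps_to (g := fun T => childCount T [])
      (t := S.image (fun T => childCount T [])) (fun T hT => Finset.mem_image_of_mem _ hT)]
    have hfiber : ∀ k ∈ S.image (fun T => childCount T []),
        ∑ T ∈ S.filter (fun T => childCount T [] = k), treeWt p₀ p₁ T ≤ p₀ k := by
      intro k _
      have step1 : ∀ T ∈ S.filter (fun T => childCount T [] = k),
          treeWt p₀ p₁ T = p₀ k * ∏ i : Fin k, treeWt p₁ p₀ (subAt (i + 1) T) := by
        intro T hT
        simp only [Finset.mem_filter] at hT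
        rw [treeWt_factor p₀ p₁ (hS T hT.1).1, hT.2, prod_Icc_one]
      rw [Finset.sum_congr rfl step1, ← Finset.mul_sum]
      have hbound : ∑ T ∈ S.filter (fun T => childCount T [] = k),
          ∏ i : Fin k, treeWt p₁ p₀ (subAt (i + 1) T) ≤ 1 := by
        have hinj : Set.InjOn (fun T => fun i : Fin k => subAt (i + 1 : ℕ) T)
            (S.filter (fun T => childCount T [] = k)) := by
          intro T hT T' hT' heq
          simp only [Finset.coe_filter, Set.mem_setOf_eq] at hT hT'
          have h1 := tree_eq_cover (hS T hT.1).1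
          have h2 := tree_eq_cover (hS T' hT'.1).1
          rw [h1, h2, hT.2, hT'.2]
          congr 1
          apply Finset.biUnion_congr rfl
          intro j hj
          simp only [Finset.mem_Icc] at hj
          rw [show j = (j - 1) + 1 from (Nat.sub_add_cancel hj.1).symm]
          have hsub : subAt ((⟨j - 1, by omega⟩ : Fin k) + 1) T
              = subAt ((⟨j - 1, by omega⟩ : Fin k) + 1) T' := congrFun heq ⟨j - 1, by omega⟩
          simp only [] at hsub
          rw [hsub]
        calc ∑ T ∈ S.filter (fun T => childCount T [] = k),
              ∏ i : Fin k, treeWt p₁ p₀ (subAt (i + 1) T)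
            = ∑ x ∈ (S.filter (fun T => childCount T [] = k)).image
                (fun T => fun i : Fin k => subAt (i + 1 : ℕ) T),
              ∏ i : Fin k, treeWt p₁ p₀ (x i) := by
              rw [Finset.sum_image (fun a ha b hb hab => hinj ha hb hab)]
          _ ≤ ∑ x ∈ Fintype.piFinset (fun _ : Fin k => F), ∏ i : Fin k, treeWt p₁ p₀ (x i) := by
              apply Finset.sum_le_sum_of_subset_of_nonneg
              · intro x hx
                simp only [Finset.mem_image] at hx
                obtain ⟨T, hT, rfl⟩ := hx
                simp only [Finset.mem_filter] at hT
                rw [Fintype.mem_piFinset]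
                intro i
                simp only [hF, Finset.mem_biUnion]
                refine ⟨T, hT.1, ?_⟩
                rw [Finset.mem_image]
                refine ⟨(i : ℕ) + 1, ?_, rfl⟩
                rw [Finset.mem_Icc, hT.2]
                omega
              · intro x _ _
                exact Finset.prod_nonneg fun i _ => treeWt_nonneg h₁ h₀ _
          _ = (∑ t ∈ F, treeWt p₁ p₀ t) ^ k := by
              rw [← Finset.prod_univ_sum]
              simp [Finset.prod_const]
          _ ≤ 1 := pow_le_one₀ hc0 hc
      have := mul_le_mul_of_nonneg_left hbound (h₀ k)
      simpa using this
    refine le_trans (Finset.sum_le_sum ?_) (s₀ (S.image (fun T => childCount T [])))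
    intro k hk
    exact hfiber k hk


lemma card_type0 {T : Finset (List ℕ)} (hT : IsPlaneTree T) :
    (type0 T).card = 1 + ∑ u ∈ type1 T, childCount T u := by
  classical
  set A : Finset (List ℕ) := T.filter (fun v => Even v.length ∧ v ≠ []) with hA
  have h1 : type0 T = insert [] A := by
    ext v
    simp only [type0, hA, Finset.mem_insert, Finset.mem_filter]
    constructor
    · rintro ⟨hv, he⟩
      by_cases hne : v = []
      · left; exact hne
      · right; exact ⟨hv, he, hne⟩
    · rintro (rfl | ⟨hv, he, _⟩)
      · exact ⟨hT.1, by simp⟩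
      · exact ⟨hv, he⟩
  have h2 : ([] : List ℕ) ∉ A := by simp [hA]
  have hcards : (type0 T).card = 1 + A.card := by
    rw [h1, Finset.card_insert_of_notMem h2]; omega
  have hmaps : ∀ v ∈ A, v.dropLast ∈ type1 T := by
    intro v hv
    simp only [hA, Finset.mem_filter] at hv
    obtain ⟨hvT, hev, hne⟩ := hv
    have hdT : v.dropLast ∈ T := by
      have := List.dropLast_append_getLast hne
      exact hT.2.1 v.dropLast (v.getLast hne) (by rw [this]; exact hvT)
    simp only [type1, Finset.mem_filter]
    refine ⟨hdT, ?_⟩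
    rw [List.length_dropLast]
    have hlen : 1 ≤ v.length := by
      cases v with
      | nil => exact absurd rfl hne
      | cons a l => simp
    intro hodd
    rw [Nat.even_iff] at hodd hev
    omega
  have hfib := Finset.card_eq_sum_card_fiberwise hmaps
  have hfibeq : ∀ u ∈ type1 T,
      (A.filter fun v => v.dropLast = u).card = childCount T u := by
    intro u hu
    simp only [type1, Finset.mem_filter] at hu
    unfold childCount
    congr 1
    ext v
    simp only [hA, Finset.filter_filter, Finset.mem_filter]
    constructor
    · rintro ⟨hvT, ⟨hev, hne⟩, hd⟩
      exact ⟨hvT, hne, hd⟩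
    · rintro ⟨hvT, hne, hd⟩
      refine ⟨hvT, ⟨?_, hne⟩, hd⟩
      have hlen : 1 ≤ v.length := by
        cases v with
        | nil => exact absurd rfl hne
        | cons a l => simp
      have : u.length = v.length - 1 := by rw [← hd, List.length_dropLast]
      have hv : v.length = u.length + 1 := by omega
      rw [hv, Nat.even_add_one]
      exact hu.2
  rw [hcards, hfib, Finset.sum_congr rfl hfibeq]

lemma treeWt_mul (p₀ p₁ g : ℕ → ℝ) (T : Finset (List ℕ)) :
    treeWt p₀ (fun k => p₁ k * g k) T =
      treeWt p₀ p₁ T * ∏ u ∈ type1 T, g (childCount T u) := by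
  classical
  unfold treeWt type1
  rw [← Finset.prod_filter_mul_prod_filter_not T (fun v => Even v.length),
    ← Finset.prod_filter_mul_prod_filter_not T (fun v => Even v.length)]
  have e0 : ∏ u ∈ T.filter (fun v => Even v.length),
      (if Even u.length then p₀ (childCount T u) else p₁ (childCount T u) * g (childCount T u))
      = ∏ u ∈ T.filter (fun v => Even v.length),
      (if Even u.length then p₀ (childCount T u) else p₁ (childCount T u)) := by
    apply Finset.prod_congr rfl
    intro u hu
    simp only [Finset.mem_filter] at hu
    rw [if_pos hu.2, if_pos hu.2]
  have e1 : ∏ u ∈ T.filter (fun v => ¬ Even v.length),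
      (if Even u.length then p₀ (childCount T u) else p₁ (childCount T u) * g (childCount T u))
      = (∏ u ∈ T.filter (fun v => ¬ Even v.length),
        (if Even u.length then p₀ (childCount T u) else p₁ (childCount T u)))
        * ∏ u ∈ T.filter (fun v => ¬ Even v.length), g (childCount T u) := by
    rw [← Finset.prod_mul_distrib]
    apply Finset.prod_congr rfl
    intro u hu
    simp only [Finset.mem_filter] at hu
    rw [if_neg hu.2, if_neg hu.2]
  rw [e0, e1]
  ring


section Analysis
variable {q : ℕ → ℝ} {Z : ℝ}

/-- the coefficient sequence -/
abbrev acoef (q : ℕ → ℝ) (k : ℕ) : ℝ := (Ncoef (k + 1) : ℝ) * q (k + 1)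

lemma acoef_nonneg (hq : RegCrit q Z) (k : ℕ) : 0 ≤ acoef q k :=
  mul_nonneg (Nat.cast_nonneg _) (hq.nonneg _)

/-- master summability: below the radius, with polynomial factors -/
lemma summable_acoef_pow (hq : RegCrit q Z) (m : ℕ) {x : ℝ} (hx : 0 ≤ x)
    {R : ℝ} (hZR : x < R)
    (hsum : Summable fun k : ℕ => acoef q k * R ^ k) :
    Summable fun k : ℕ => acoef q k * ((k : ℝ) ^ m * x ^ k) := by
  have hR : 0 < R := lt_of_le_of_lt hx hZR
  obtain ⟨C, hC⟩ := (hsum.tendsto_atTop_zero.bddAbove_range)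
  simp only [mem_upperBounds, Set.mem_range, forall_exists_index] at hC
  have hC' : ∀ k : ℕ, acoef q k * R ^ k ≤ C := fun k => hC _ k rfl
  have hr : x / R < 1 := (div_lt_one hR).mpr hZR
  have hr0 : 0 ≤ x / R := div_nonneg hx hR.le
  have hgeo : Summable fun k : ℕ => C * ((k : ℝ) ^ m * (x / R) ^ k) :=
    (summable_pow_mul_geometric_of_norm_lt_one m
      (by rwa [Real.norm_eq_abs, abs_of_nonneg hr0])).mul_left C
  apply Summable.of_nonneg_of_le _ _ hgeo
  · intro k
    exact mul_nonneg (acoef_nonneg hq k)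
      (mul_nonneg (pow_nonneg (Nat.cast_nonneg _) _) (pow_nonneg hx _))
  · intro k
    have hxk : x ^ k = R ^ k * (x / R) ^ k := by
      rw [div_pow, mul_div_cancel₀]
      exact pow_ne_zero _ hR.ne'
    calc acoef q k * ((k : ℝ) ^ m * x ^ k)
        = (acoef q k * R ^ k) * ((k : ℝ) ^ m * (x / R) ^ k) := by rw [hxk]; ring
      _ ≤ C * ((k : ℝ) ^ m * (x / R) ^ k) := by
          apply mul_le_mul_of_nonneg_right (hC' k)
          exact mul_nonneg (pow_nonneg (Nat.cast_nonneg _) _) (pow_nonneg hr0 _)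

lemma summable_at_Z (hq : RegCrit q Z) : Summable fun k : ℕ => acoef q k * Z ^ k := by
  obtain ⟨R, hZR, hsum⟩ := hq.regular
  have := summable_acoef_pow hq 0 hq.Zpos.le hZR hsum
  simpa using this

lemma fqZ_pos (hq : RegCrit q Z) : 0 < fq q Z := by
  obtain ⟨i, hi2, hiq⟩ := hq.some_pos
  have hsum := summable_at_Z hq
  have hterm : 0 < acoef q (i - 1) * Z ^ (i - 1) := by
    apply mul_pos
    · apply mul_pos
      · have : 0 < Ncoef (i - 1 + 1) := by
          unfold Ncoef
          apply Nat.choose_pos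
          omega
        exact_mod_cast this
      · rwa [show i - 1 + 1 = i by omega]
    · exact pow_pos hq.Zpos _
  have hle : acoef q (i - 1) * Z ^ (i - 1) ≤ fq q Z := by
    unfold fq
    have : ∀ k, 0 ≤ acoef q k * Z ^ k := fun k =>
      mul_nonneg (acoef_nonneg hq k) (pow_pos hq.Zpos k).le
    exact Summable.le_tsum hsum _ fun k _ => this k
  linarith

lemma Z_gt_one (hq : RegCrit q Z) : 1 < Z := by
  have h := hq.fixedPoint
  have hpos := fqZ_pos hq
  rw [h] at hpos
  by_contra hle
  push_neg at hle
  have : 1 / Z ≥ 1 := by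
    rw [ge_iff_le, le_div_iff₀ hq.Zpos]
    linarith
  linarith

lemma fqZ_lt_one (hq : RegCrit q Z) : fq q Z < 1 := by
  rw [hq.fixedPoint]
  have hZ := hq.Zpos
  have : 0 < 1 / Z := by positivity
  linarith

lemma mu0_nonneg (hq : RegCrit q Z) (k : ℕ) : 0 ≤ mu0 q Z k := by
  unfold mu0
  have h1 := fqZ_pos hq
  have h2 := hq.Zpos
  positivity

lemma mu0_summable (hq : RegCrit q Z) : Summable (mu0 q Z) := by
  unfold mu0
  apply Summable.mul_left
  exact summable_geometric_of_lt_one (fqZ_pos hq).le (fqZ_lt_one hq)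

lemma mu0_tsum (hq : RegCrit q Z) : ∑' k, mu0 q Z k = 1 := by
  unfold mu0
  rw [tsum_mul_left, tsum_geometric_of_lt_one (fqZ_pos hq).le (fqZ_lt_one hq),
    hq.fixedPoint]
  have hZ0 : Z ≠ 0 := hq.Zpos.ne'
  field_simp
  ring

lemma mu1_eq (k : ℕ) : mu1 q Z k = acoef q k * Z ^ k / fq q Z := by
  unfold mu1 acoef; ring

lemma mu1_nonneg (hq : RegCrit q Z) (k : ℕ) : 0 ≤ mu1 q Z k := by
  rw [mu1_eq]
  have h1 := fqZ_pos hq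
  have h2 := acoef_nonneg hq k
  have h3 : (0:ℝ) ≤ Z ^ k := (pow_pos hq.Zpos k).le
  positivity

lemma mu1_summable (hq : RegCrit q Z) : Summable (mu1 q Z) := by
  have : (mu1 q Z) = fun k => (acoef q k * Z ^ k) * (fq q Z)⁻¹ := by
    funext k; rw [mu1_eq]; ring
  rw [this]
  exact (summable_at_Z hq).mul_right _

lemma mu1_tsum (hq : RegCrit q Z) : ∑' k, mu1 q Z k = 1 := by
  have : (fun k => mu1 q Z k) = fun k => (acoef q k * Z ^ k) * (fq q Z)⁻¹ := by
    funext k; rw [mu1_eq]; ring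
  rw [this, tsum_mul_right]
  have : ∑' k, acoef q k * Z ^ k = fq q Z := by unfold fq acoef; rfl
  rw [this, mul_inv_cancel₀ (fqZ_pos hq).ne']


lemma exp_taylor (x : ℝ) : Real.exp x ≤ 1 + x + x ^ 2 * Real.exp |x| := by
  rcases le_or_gt |x| 1 with h | h
  · have hb := Real.exp_bound h (n := 2) (by norm_num)
    have hsum : ∑ m ∈ Finset.range 2, x ^ m / (m.factorial : ℝ) = 1 + x := by
      simp [Finset.sum_range_succ]
    rw [hsum] at hb
    norm_num at hb
    have h2 := (abs_le.mp hb).2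
    have h1 : (1 : ℝ) ≤ Real.exp |x| := Real.one_le_exp (abs_nonneg x)
    nlinarith [sq_abs x, sq_nonneg x]
  · rcases le_or_gt 0 x with hx | hx
    · have hx1 : 1 < x := by rwa [abs_of_nonneg hx] at h
      rw [abs_of_nonneg hx]
      have hkey : 0 < (x ^ 2 - 1) * Real.exp x := by
        apply mul_pos (by nlinarith) (Real.exp_pos x)
      nlinarith [Real.exp_pos x]
    · have hx1 : x < -1 := by
        rw [abs_of_neg hx] at h; linarith
      have h1 : Real.exp x ≤ 1 := Real.exp_le_one_iff.mpr (by linarith)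
      have h2 : (1 : ℝ) ≤ Real.exp |x| := Real.one_le_exp (abs_nonneg x)
      nlinarith

lemma summable_mu1_exp_pow (hq : RegCrit q Z) (m : ℕ) {θ R : ℝ} (hZR : Z < R)
    (hsum : Summable fun k : ℕ => acoef q k * R ^ k)
    (hθ : Z * Real.exp θ < R) :
    Summable fun k : ℕ => mu1 q Z k * ((k : ℝ) ^ m * Real.exp (θ * k)) := by
  have hf := fqZ_pos hq
  have hZ0 := hq.Zpos
  have hx0 : (0:ℝ) ≤ Z * Real.exp θ := mul_nonneg hZ0.le (Real.exp_pos θ).le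
  have hbig := (summable_acoef_pow hq m hx0 hθ hsum).mul_right (fq q Z)⁻¹
  have heq : (fun k : ℕ => mu1 q Z k * ((k : ℝ) ^ m * Real.exp (θ * k)))
      = fun k : ℕ => acoef q k * ((k : ℝ) ^ m * (Z * Real.exp θ) ^ k) * (fq q Z)⁻¹ := by
    funext k
    rw [mu1_eq, mul_pow, ← Real.exp_nat_mul]
    rw [show (k : ℝ) * θ = θ * k by ring]
    field_simp
  rw [heq]
  exact hbig

lemma Mex_bound (hq : RegCrit q Z) {R : ℝ} (hZR : Z < R)
    (hsum : Summable fun k : ℕ => acoef q k * R ^ k)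
    {θ₀ : ℝ} (hθ₀pos : 0 < θ₀) (hy : Z * Real.exp θ₀ < R) {θ : ℝ} (hθ : |θ| ≤ θ₀) :
    (∑' k : ℕ, mu1 q Z k * Real.exp (θ * k)) ≤
      Real.exp (θ * meanMu1 q Z +
        θ ^ 2 * ∑' k : ℕ, mu1 q Z k * ((k : ℝ) ^ 2 * Real.exp (θ₀ * k))) := by
  have hZ0 := hq.Zpos
  have hZ1 : Z * Real.exp 0 < R := by simpa using hZR
  have S1 : Summable fun k : ℕ => mu1 q Z k * ((k : ℝ) ^ 1 * Real.exp (0 * k)) :=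
    summable_mu1_exp_pow hq 1 hZR hsum hZ1
  have S1' : Summable fun k : ℕ => mu1 q Z k * (k : ℝ) := by
    have : (fun k : ℕ => mu1 q Z k * (k : ℝ))
        = fun k : ℕ => mu1 q Z k * ((k : ℝ) ^ 1 * Real.exp (0 * k)) := by
      funext k; simp
    rw [this]; exact S1
  have S2 : Summable fun k : ℕ => mu1 q Z k * ((k : ℝ) ^ 2 * Real.exp (θ₀ * k)) :=
    summable_mu1_exp_pow hq 2 hZR hsum hy
  have Sθ : Summable fun k : ℕ => mu1 q Z k * Real.exp (θ * k) := by
    have hθR : Z * Real.exp θ < R := by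
      have : Real.exp θ ≤ Real.exp θ₀ := Real.exp_le_exp.mpr (le_trans (le_abs_self θ) hθ)
      nlinarith
    have := summable_mu1_exp_pow hq 0 hZR hsum hθR
    simpa using this
  have S0 := mu1_summable hq
  -- pointwise bound
  have hpt : ∀ k : ℕ, mu1 q Z k * Real.exp (θ * k) ≤
      mu1 q Z k + θ * (mu1 q Z k * (k : ℝ)) +
        θ ^ 2 * (mu1 q Z k * ((k : ℝ) ^ 2 * Real.exp (θ₀ * k))) := by
    intro k
    have hmu := mu1_nonneg hq k
    have htay := exp_taylor (θ * k)
    have habs : |θ * k| ≤ θ₀ * k := by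
      rw [abs_mul, Nat.abs_cast]
      exact mul_le_mul_of_nonneg_right hθ (Nat.cast_nonneg k)
    have hexple : Real.exp |θ * k| ≤ Real.exp (θ₀ * k) := Real.exp_le_exp.mpr habs
    have h2 : Real.exp (θ * k) ≤ 1 + θ * k + θ ^ 2 * ((k:ℝ) ^ 2 * Real.exp (θ₀ * k)) := by
      calc Real.exp (θ * k) ≤ 1 + θ * k + (θ * k) ^ 2 * Real.exp |θ * k| := htay
        _ ≤ 1 + θ * k + (θ * k) ^ 2 * Real.exp (θ₀ * k) := by nlinarith [sq_nonneg (θ * k)]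
        _ = 1 + θ * k + θ ^ 2 * ((k:ℝ) ^ 2 * Real.exp (θ₀ * k)) := by ring
    calc mu1 q Z k * Real.exp (θ * k)
        ≤ mu1 q Z k * (1 + θ * k + θ ^ 2 * ((k:ℝ) ^ 2 * Real.exp (θ₀ * k))) :=
          mul_le_mul_of_nonneg_left h2 hmu
      _ = mu1 q Z k + θ * (mu1 q Z k * (k : ℝ)) +
          θ ^ 2 * (mu1 q Z k * ((k : ℝ) ^ 2 * Real.exp (θ₀ * k))) := by ring
  have Srhs : Summable fun k : ℕ => mu1 q Z k + θ * (mu1 q Z k * (k : ℝ)) +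
      θ ^ 2 * (mu1 q Z k * ((k : ℝ) ^ 2 * Real.exp (θ₀ * k))) :=
    (S0.add (S1'.mul_left θ)).add (S2.mul_left (θ ^ 2))
  have hle := Summable.tsum_le_tsum hpt Sθ Srhs
  have hrhs : (∑' k : ℕ, (mu1 q Z k + θ * (mu1 q Z k * (k : ℝ)) +
      θ ^ 2 * (mu1 q Z k * ((k : ℝ) ^ 2 * Real.exp (θ₀ * k)))))
      = 1 + (θ * meanMu1 q Z +
        θ ^ 2 * ∑' k : ℕ, mu1 q Z k * ((k : ℝ) ^ 2 * Real.exp (θ₀ * k))) := by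
    rw [Summable.tsum_add (S0.add (S1'.mul_left θ)) (S2.mul_left (θ ^ 2)),
      Summable.tsum_add S0 (S1'.mul_left θ), tsum_mul_left, tsum_mul_left, mu1_tsum hq]
    have hm : meanMu1 q Z = ∑' k : ℕ, mu1 q Z k * (k : ℝ) := by
      unfold meanMu1
      apply tsum_congr; intro k; ring
    rw [hm]; ring
  rw [hrhs] at hle
  calc (∑' k : ℕ, mu1 q Z k * Real.exp (θ * k))
      ≤ 1 + (θ * meanMu1 q Z + θ ^ 2 * ∑' k : ℕ, mu1 q Z k * ((k:ℝ)^2 * Real.exp (θ₀ * k))) := hle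
    _ ≤ Real.exp (θ * meanMu1 q Z + θ ^ 2 * ∑' k : ℕ, mu1 q Z k * ((k:ℝ)^2 * Real.exp (θ₀ * k))) := by
        have := Real.add_one_le_exp (θ * meanMu1 q Z + θ ^ 2 * ∑' k : ℕ, mu1 q Z k * ((k:ℝ)^2 * Real.exp (θ₀ * k)))
        linarith

end Analysis

section Glue
variable {q : ℕ → ℝ} {Z : ℝ}

lemma mu1_pos_ex (hq : RegCrit q Z) : ∃ k, 0 < mu1 q Z k := by
  obtain ⟨i, hi2, hiq⟩ := hq.some_pos
  refine ⟨i - 1, ?_⟩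
  rw [mu1_eq]
  have hf := fqZ_pos hq
  have hN : (0:ℝ) < (Ncoef (i - 1 + 1) : ℕ) := by
    have : 0 < Ncoef (i - 1 + 1) := by
      unfold Ncoef
      exact Nat.choose_pos (by omega)
    exact_mod_cast this
  have hq' : 0 < q (i - 1 + 1) := by rwa [show i - 1 + 1 = i by omega]
  have hZk : (0:ℝ) < Z ^ (i - 1) := pow_pos hq.Zpos _
  have : (0:ℝ) < acoef q (i - 1) := mul_pos hN hq'
  positivity

lemma gw_tsum (p₀ p₁ : ℕ → ℝ) (h₀ : ∀ k, 0 ≤ p₀ k) (h₁ : ∀ k, 0 ≤ p₁ k)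
    (s₀ : ∀ F : Finset ℕ, ∑ k ∈ F, p₀ k ≤ 1) (s₁ : ∀ F : Finset ℕ, ∑ k ∈ F, p₁ k ≤ 1) :
    Summable (fun T : Finset (List ℕ) => if IsPlaneTree T then treeWt p₀ p₁ T else 0) ∧
      ∑' T : Finset (List ℕ), (if IsPlaneTree T then treeWt p₀ p₁ T else 0) ≤ 1 := by
  set f : Finset (List ℕ) → ℝ := fun T => if IsPlaneTree T then treeWt p₀ p₁ T else 0 with hf
  have hnn : ∀ T, 0 ≤ f T := by
    intro T
    simp only [hf]
    split
    · exact treeWt_nonneg h₀ h₁ T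
    · exact le_refl 0
  have hpartial : ∀ u : Finset (Finset (List ℕ)), ∑ T ∈ u, f T ≤ 1 := by
    intro u
    rw [hf, Finset.sum_ite, Finset.sum_const_zero, add_zero]
    apply gw_partial_sum_le (u.sup fun T => T.sup List.length) p₀ p₁ h₀ h₁ s₀ s₁
    intro T hT
    simp only [Finset.mem_filter] at hT
    refine ⟨hT.2, ?_⟩
    intro v hv
    calc v.length = List.length v := rfl
      _ ≤ T.sup List.length := Finset.le_sup hv
      _ ≤ u.sup (fun T => T.sup List.length) := Finset.le_sup hT.1
  have hsummable : Summable f := summable_of_sum_le hnn hpartial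
  exact ⟨hsummable, Summable.tsum_le_of_sum_le hsummable hpartial⟩

lemma tilt_eq (hq : RegCrit q Z) {T : Finset (List ℕ)} (hT : IsPlaneTree T)
    (θ c : ℝ) (hc : c ≠ 0) :
    treeWt (mu0 q Z) (fun k => mu1 q Z k * (Real.exp (θ * k) / c)) T =
      treeWt (mu0 q Z) (mu1 q Z) T *
        (Real.exp (θ * (((type0 T).card : ℝ) - 1)) / c ^ (type1 T).card) := by
  rw [treeWt_mul]
  congr 1
  rw [Finset.prod_div_distrib, Finset.prod_const]
  congr 1
  rw [← Real.exp_sum]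
  congr 1
  rw [← Finset.mul_sum]
  congr 1
  have h := card_type0 hT
  have : ((type0 T).card : ℝ) = 1 + ((∑ u ∈ type1 T, childCount T u : ℕ) : ℝ) := by
    exact_mod_cast congrArg (Nat.cast : ℕ → ℝ) h
  rw [Nat.cast_sum] at this
  linarith

end Glue


set_option maxHeartbeats 1600000 in
/-- estimate `(β₁)` in the proof of Lemma `feuilles`:
`P_μ(|#T⁰ - m₁ n| > n^{3/4}, #T¹ = n) ≤ exp(-n^{β₁})` for large `n`. -/
theorem stmt10 (q : ℕ → ℝ) (Z : ℝ) (hq : RegCrit q Z) :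
    ∃ β₁ : ℝ, 0 < β₁ ∧ ∀ᶠ n : ℕ in atTop,
      tP (mu0 q Z) (mu1 q Z)
          (fun T => |((type0 T).card : ℝ) - meanMu1 q Z * n| > (n : ℝ) ^ ((3 : ℝ) / 4) ∧
            t1card T = n) ≤
        Real.exp (-(n : ℝ) ^ β₁) := by
  classical
  obtain ⟨R, hZR, hsumR⟩ := hq.regular
  have hsumR' : Summable fun k : ℕ => acoef q k * R ^ k := hsumR
  have hZpos := hq.Zpos
  have hRpos : 0 < R := lt_trans hZpos hZR
  have hZy : Z < (Z + R) / 2 := by linarith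
  have hyR : (Z + R) / 2 < R := by linarith
  have hypos : 0 < (Z + R) / 2 := lt_trans hZpos hZy
  set θ₀ : ℝ := Real.log ((Z + R) / 2 / Z) with hθ₀
  have hθ₀pos : 0 < θ₀ := Real.log_pos (by rw [lt_div_iff₀ hZpos]; linarith)
  have hyy' : Z * Real.exp θ₀ < R := by
    rw [hθ₀, Real.exp_log (by positivity), mul_comm, div_mul_cancel₀ _ hZpos.ne']
    exact hyR
  set B : ℝ := ∑' k : ℕ, mu1 q Z k * ((k : ℝ) ^ 2 * Real.exp (θ₀ * k)) with hB
  have hB0 : 0 ≤ B := tsum_nonneg fun k =>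
    mul_nonneg (mu1_nonneg hq k) (by positivity)
  set ε : ℝ := min θ₀ (1 / (2 * (B + 1))) with hε
  have hε0 : 0 < ε := lt_min hθ₀pos (by positivity)
  have hεB : ε * B ≤ 1 / 2 := by
    have h1 : ε ≤ 1 / (2 * (B + 1)) := min_le_right _ _
    have h2 : (0:ℝ) < 2 * (B + 1) := by linarith
    calc ε * B ≤ 1 / (2 * (B + 1)) * B := mul_le_mul_of_nonneg_right h1 hB0
      _ ≤ 1 / 2 := by rw [div_mul_eq_mul_div, div_le_iff₀ h2]; linarith
  refine ⟨1/4, by norm_num, ?_⟩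
  have hev1 : ∀ᶠ n : ℕ in atTop, 1 ≤ n := Filter.eventually_ge_atTop 1
  have hev2 : ∀ᶠ n : ℕ in atTop,
      max 1 (2 * (2 + ε) / ε) ≤ (n : ℝ) ^ ((1:ℝ)/4) := by
    have h := (tendsto_rpow_atTop (show (0:ℝ) < 1/4 by norm_num)).comp
      (tendsto_natCast_atTop_atTop (R := ℝ))
    exact h.eventually_ge_atTop _
  filter_upwards [hev1, hev2] with n hn1 hnK
  have htP : tP (mu0 q Z) (mu1 q Z)
      (fun T => |((type0 T).card : ℝ) - meanMu1 q Z * n| > (n : ℝ) ^ ((3 : ℝ) / 4) ∧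
        t1card T = n)
      = ∑' T : Finset (List ℕ),
        (if IsPlaneTree T ∧ (|((type0 T).card : ℝ) - meanMu1 q Z * n| > (n : ℝ) ^ ((3 : ℝ) / 4) ∧
          t1card T = n) then treeWt (mu0 q Z) (mu1 q Z) T else 0) := by
    unfold tP
    exact tsum_congr fun T => by congr 1
  rw [htP]
  -- basic quantities for this n
  have hnpos : (0:ℝ) < n := by exact_mod_cast hn1
  have hn1' : (1:ℝ) ≤ n := by exact_mod_cast hn1
  set t : ℝ := (n:ℝ) ^ ((1:ℝ)/4) with ht
  have ht1 : 1 ≤ t := by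
    rw [ht]
    calc (1:ℝ) = (1:ℝ) ^ ((1:ℝ)/4) := (Real.one_rpow _).symm
      _ ≤ (n:ℝ) ^ ((1:ℝ)/4) :=
        Real.rpow_le_rpow (by norm_num) hn1' (by norm_num)
  have ht0 : (0:ℝ) < t := lt_of_lt_of_le one_pos ht1
  have htK : 2 * (2 + ε) / ε ≤ t := le_trans (le_max_right _ _) hnK
  set θ : ℝ := ε * (n:ℝ) ^ (-(1/4) : ℝ) with hθdef
  have hrpos : (0:ℝ) < (n:ℝ) ^ (-(1/4) : ℝ) := Real.rpow_pos_of_pos hnpos _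
  have hθpos : 0 < θ := mul_pos hε0 hrpos
  have hrle1 : (n:ℝ) ^ (-(1/4) : ℝ) ≤ 1 :=
    Real.rpow_le_one_of_one_le_of_nonpos hn1' (by norm_num)
  have hθε : θ ≤ ε := by
    rw [hθdef]
    exact mul_le_of_le_one_right hε0.le hrle1
  have hθθ₀ : θ ≤ θ₀ := le_trans hθε (min_le_left _ _)
  -- moment generating functions
  set Mp : ℝ := ∑' k : ℕ, mu1 q Z k * Real.exp (θ * k) with hMp
  set Mm : ℝ := ∑' k : ℕ, mu1 q Z k * Real.exp (-θ * k) with hMm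
  have habs_p : |θ| ≤ θ₀ := by rw [abs_of_pos hθpos]; exact hθθ₀
  have habs_m : |(-θ)| ≤ θ₀ := by rw [abs_neg, abs_of_pos hθpos]; exact hθθ₀
  have hMple : Mp ≤ Real.exp (θ * meanMu1 q Z + θ ^ 2 * B) := by
    have h := Mex_bound hq hZR hsumR' hθ₀pos hyy' habs_p
    rw [← hB] at h
    exact h
  have hMmle : Mm ≤ Real.exp (-θ * meanMu1 q Z + θ ^ 2 * B) := by
    have h := Mex_bound hq hZR hsumR' hθ₀pos hyy' habs_m
    rw [← hB] at h
    have h2 : (-θ) ^ 2 = θ ^ 2 := by ring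
    rwa [h2] at h
  have hZeR_p : Z * Real.exp θ < R := by
    have h := Real.exp_le_exp.mpr hθθ₀
    exact lt_of_le_of_lt (mul_le_mul_of_nonneg_left h hZpos.le) hyy'
  have hZeR_m : Z * Real.exp (-θ) < R := by
    have h := Real.exp_le_exp.mpr (show -θ ≤ θ₀ by linarith)
    exact lt_of_le_of_lt (mul_le_mul_of_nonneg_left h hZpos.le) hyy'
  have Sp : Summable fun k : ℕ => mu1 q Z k * Real.exp (θ * k) := by
    have := summable_mu1_exp_pow hq 0 hZR hsumR' hZeR_p
    simpa using this
  have Sm : Summable fun k : ℕ => mu1 q Z k * Real.exp (-θ * k) := by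
    have := summable_mu1_exp_pow hq 0 hZR hsumR' hZeR_m
    simpa using this
  have hMp0 : 0 < Mp := by
    obtain ⟨k₀, hk₀⟩ := mu1_pos_ex hq
    have hterm : 0 < mu1 q Z k₀ * Real.exp (θ * k₀) := mul_pos hk₀ (Real.exp_pos _)
    have hle := Summable.le_tsum Sp k₀ fun j _ =>
      mul_nonneg (mu1_nonneg hq j) (Real.exp_pos _).le
    rw [← hMp] at hle
    linarith
  have hMm0 : 0 < Mm := by
    obtain ⟨k₀, hk₀⟩ := mu1_pos_ex hq
    have hterm : 0 < mu1 q Z k₀ * Real.exp (-θ * k₀) := mul_pos hk₀ (Real.exp_pos _)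
    have hle := Summable.le_tsum Sm k₀ fun j _ =>
      mul_nonneg (mu1_nonneg hq j) (Real.exp_pos _).le
    rw [← hMm] at hle
    linarith
  -- tilted offspring laws
  set pp : ℕ → ℝ := fun k => mu1 q Z k * (Real.exp (θ * k) / Mp) with hpp
  set pm : ℕ → ℝ := fun k => mu1 q Z k * (Real.exp (-θ * k) / Mm) with hpm
  have hppn : ∀ k, 0 ≤ pp k := fun k =>
    mul_nonneg (mu1_nonneg hq k) (div_nonneg (Real.exp_pos _).le hMp0.le)
  have hpmn : ∀ k, 0 ≤ pm k := fun k =>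
    mul_nonneg (mu1_nonneg hq k) (div_nonneg (Real.exp_pos _).le hMm0.le)
  have hppsum : ∀ F : Finset ℕ, ∑ k ∈ F, pp k ≤ 1 := by
    intro F
    have h1 : ∑ k ∈ F, mu1 q Z k * Real.exp (θ * k) ≤ Mp := by
      have := Summable.sum_le_tsum F (fun k _ =>
        mul_nonneg (mu1_nonneg hq k) (Real.exp_pos _).le) Sp
      rwa [← hMp] at this
    have h2 : ∑ k ∈ F, pp k = (∑ k ∈ F, mu1 q Z k * Real.exp (θ * k)) / Mp := by
      rw [Finset.sum_div]
      apply Finset.sum_congr rfl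
      intro k _
      rw [hpp]
      ring
    rw [h2, div_le_one hMp0]
    exact h1
  have hpmsum : ∀ F : Finset ℕ, ∑ k ∈ F, pm k ≤ 1 := by
    intro F
    have h1 : ∑ k ∈ F, mu1 q Z k * Real.exp (-θ * k) ≤ Mm := by
      have := Summable.sum_le_tsum F (fun k _ =>
        mul_nonneg (mu1_nonneg hq k) (Real.exp_pos _).le) Sm
      rwa [← hMm] at this
    have h2 : ∑ k ∈ F, pm k = (∑ k ∈ F, mu1 q Z k * Real.exp (-θ * k)) / Mm := by
      rw [Finset.sum_div]
      apply Finset.sum_congr rfl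
      intro k _
      rw [hpm]
      ring
    rw [h2, div_le_one hMm0]
    exact h1
  have hmu0n : ∀ k, 0 ≤ mu0 q Z k := mu0_nonneg hq
  have hmu0sum : ∀ F : Finset ℕ, ∑ k ∈ F, mu0 q Z k ≤ 1 := by
    intro F
    have := Summable.sum_le_tsum F (fun k _ => mu0_nonneg hq k) (mu0_summable hq)
    rwa [mu0_tsum hq] at this
  obtain ⟨hSp', hTp'⟩ := gw_tsum (mu0 q Z) pp hmu0n hppn hmu0sum hppsum
  obtain ⟨hSm', hTm'⟩ := gw_tsum (mu0 q Z) pm hmu0n hpmn hmu0sum hpmsum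
  -- the constants
  set np : ℝ := (n:ℝ) ^ ((3:ℝ)/4) with hnp34
  set cp : ℝ := Real.exp (θ - θ * (meanMu1 q Z * n) - θ * np) * Mp ^ n with hcp
  set cm : ℝ := Real.exp (-θ + θ * (meanMu1 q Z * n) - θ * np) * Mm ^ n with hcm
  have hcp0 : 0 ≤ cp := mul_nonneg (Real.exp_pos _).le (pow_nonneg hMp0.le n)
  have hcm0 : 0 ≤ cm := mul_nonneg (Real.exp_pos _).le (pow_nonneg hMm0.le n)
  -- pointwise domination
  set f : Finset (List ℕ) → ℝ := fun T =>
    if IsPlaneTree T ∧ (|((type0 T).card : ℝ) - meanMu1 q Z * n| > np ∧ t1card T = n)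
    then treeWt (mu0 q Z) (mu1 q Z) T else 0 with hfdef
  set gp : Finset (List ℕ) → ℝ := fun T =>
    if IsPlaneTree T then treeWt (mu0 q Z) pp T else 0 with hgp
  set gm : Finset (List ℕ) → ℝ := fun T =>
    if IsPlaneTree T then treeWt (mu0 q Z) pm T else 0 with hgm
  have hgp0 : ∀ T, 0 ≤ gp T := by
    intro T
    rw [hgp]
    dsimp only
    split
    · exact treeWt_nonneg hmu0n hppn T
    · exact le_refl 0
  have hgm0 : ∀ T, 0 ≤ gm T := by
    intro T
    rw [hgm]
    dsimp only
    split
    · exact treeWt_nonneg hmu0n hpmn T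
    · exact le_refl 0
  have hf0 : ∀ T, 0 ≤ f T := by
    intro T
    rw [hfdef]
    dsimp only
    split
    · exact treeWt_nonneg hmu0n (mu1_nonneg hq) T
    · exact le_refl 0
  have hfg : ∀ T, f T ≤ cp * gp T + cm * gm T := by
    intro T
    by_cases hc : IsPlaneTree T ∧
        (|((type0 T).card : ℝ) - meanMu1 q Z * n| > np ∧ t1card T = n)
    · obtain ⟨hpt, hdev, hcard⟩ := hc
      have hfT : f T = treeWt (mu0 q Z) (mu1 q Z) T := by
        rw [hfdef]
        exact if_pos ⟨hpt, hdev, hcard⟩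
      have hcard' : (type1 T).card = n := hcard
      have hgpT : gp T = treeWt (mu0 q Z) pp T := by rw [hgp]; exact if_pos hpt
      have hgmT : gm T = treeWt (mu0 q Z) pm T := by rw [hgm]; exact if_pos hpt
      set W : ℝ := treeWt (mu0 q Z) (mu1 q Z) T with hW
      have hW0 : 0 ≤ W := treeWt_nonneg hmu0n (mu1_nonneg hq) T
      set c₀ : ℝ := ((type0 T).card : ℝ) with hc₀
      have he1 : cp * gp T = W * Real.exp (θ * (c₀ - meanMu1 q Z * n - np)) := by
        rw [hgpT, hpp, tilt_eq hq hpt θ Mp hMp0.ne', hcard', hcp, ← hW, ← hc₀]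
        have hMn : Mp ^ n ≠ 0 := pow_ne_zero n hMp0.ne'
        have hE : Real.exp (θ - θ * (meanMu1 q Z * ↑n) - θ * np) * Real.exp (θ * (c₀ - 1))
            = Real.exp (θ * (c₀ - meanMu1 q Z * ↑n - np)) := by
          rw [← Real.exp_add]
          congr 1
          ring
        rw [← hE]
        field_simp
      have he2 : cm * gm T = W * Real.exp (θ * (meanMu1 q Z * n - c₀ - np)) := by
        rw [hgmT, hpm, tilt_eq hq hpt (-θ) Mm hMm0.ne', hcard', hcm, ← hW, ← hc₀]
        have hMn : Mm ^ n ≠ 0 := pow_ne_zero n hMm0.ne'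
        have hE : Real.exp (-θ + θ * (meanMu1 q Z * ↑n) - θ * np) * Real.exp (-θ * (c₀ - 1))
            = Real.exp (θ * (meanMu1 q Z * ↑n - c₀ - np)) := by
          rw [← Real.exp_add]
          congr 1
          ring
        rw [← hE]
        field_simp
      rw [hfT, he1, he2]
      rcases lt_abs.mp hdev with hdev1 | hdev1
      · have hexp : (1:ℝ) ≤ Real.exp (θ * (c₀ - meanMu1 q Z * n - np)) := by
          apply Real.one_le_exp
          have hnn : 0 ≤ c₀ - meanMu1 q Z * n - np := by rw [hc₀]; linarith
          exact mul_nonneg hθpos.le hnn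
        have hstep : W ≤ W * Real.exp (θ * (c₀ - meanMu1 q Z * n - np)) := by
          calc W = W * 1 := (mul_one W).symm
            _ ≤ W * Real.exp (θ * (c₀ - meanMu1 q Z * n - np)) :=
              mul_le_mul_of_nonneg_left hexp hW0
        have hpos2 : 0 ≤ W * Real.exp (θ * (meanMu1 q Z * n - c₀ - np)) :=
          mul_nonneg hW0 (Real.exp_pos _).le
        linarith only [hstep, hpos2]
      · have hexp : (1:ℝ) ≤ Real.exp (θ * (meanMu1 q Z * n - c₀ - np)) := by
          apply Real.one_le_exp
          have hnn : 0 ≤ meanMu1 q Z * n - c₀ - np := by rw [hc₀]; linarith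
          exact mul_nonneg hθpos.le hnn
        have hstep : W ≤ W * Real.exp (θ * (meanMu1 q Z * n - c₀ - np)) := by
          calc W = W * 1 := (mul_one W).symm
            _ ≤ W * Real.exp (θ * (meanMu1 q Z * n - c₀ - np)) :=
              mul_le_mul_of_nonneg_left hexp hW0
        have hpos2 : 0 ≤ W * Real.exp (θ * (c₀ - meanMu1 q Z * n - np)) :=
          mul_nonneg hW0 (Real.exp_pos _).le
        linarith only [hstep, hpos2]
    · have hfT : f T = 0 := by rw [hfdef]; exact if_neg hc
      rw [hfT]
      exact add_nonneg (mul_nonneg hcp0 (hgp0 T)) (mul_nonneg hcm0 (hgm0 T))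
  -- summability and tsum comparison
  have hgsum : Summable fun T => cp * gp T + cm * gm T :=
    (hSp'.mul_left cp).add (hSm'.mul_left cm)
  have hfsum : Summable f := Summable.of_nonneg_of_le hf0 hfg hgsum
  have hstep1 : ∑' T, f T ≤ cp + cm := by
    calc ∑' T, f T ≤ ∑' T, (cp * gp T + cm * gm T) := Summable.tsum_le_tsum hfg hfsum hgsum
      _ = cp * (∑' T, gp T) + cm * (∑' T, gm T) := by
          rw [Summable.tsum_add (hSp'.mul_left cp) (hSm'.mul_left cm), tsum_mul_left, tsum_mul_left]
      _ ≤ cp * 1 + cm * 1 :=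
          add_le_add (mul_le_mul_of_nonneg_left hTp' hcp0)
            (mul_le_mul_of_nonneg_left hTm' hcm0)
      _ = cp + cm := by ring
  -- numeric bound on cp + cm
  have ht2 : t ^ 2 = (n:ℝ) ^ ((1:ℝ)/2) := by
    rw [ht, ← Real.rpow_natCast ((n:ℝ) ^ ((1:ℝ)/4)) 2, ← Real.rpow_mul hnpos.le]
    norm_num
  have hθnp : θ * np = ε * t ^ 2 := by
    rw [hθdef, hnp34, ht2, mul_assoc, ← Real.rpow_add hnpos]
    norm_num
  have hnθ2 : (n:ℝ) * θ ^ 2 = ε ^ 2 * t ^ 2 := by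
    rw [hθdef, ht2, mul_pow, ← Real.rpow_natCast ((n:ℝ) ^ (-(1/4) : ℝ)) 2,
      ← Real.rpow_mul hnpos.le]
    rw [show (n:ℝ) = (n:ℝ) ^ (1:ℝ) from (Real.rpow_one _).symm]
    rw [show ((n:ℝ) ^ (1:ℝ)) ^ (-(1/4) * (2:ℕ) : ℝ) = (n:ℝ) ^ (-(1/4) * (2:ℕ) : ℝ) from by
      rw [Real.rpow_one]]
    rw [mul_comm (ε^2) _, ← mul_assoc, ← Real.rpow_add hnpos]
    norm_num
    ring
  have hexp_p : cp ≤ Real.exp (θ - θ * np + (n:ℝ) * θ ^ 2 * B) := by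
    have hpow : Mp ^ n ≤ Real.exp (θ * meanMu1 q Z + θ ^ 2 * B) ^ n :=
      pow_le_pow_left₀ hMp0.le hMple n
    calc cp ≤ Real.exp (θ - θ * (meanMu1 q Z * n) - θ * np) *
          Real.exp (θ * meanMu1 q Z + θ ^ 2 * B) ^ n := by
          rw [hcp]
          exact mul_le_mul_of_nonneg_left hpow (Real.exp_pos _).le
      _ = Real.exp (θ - θ * np + (n:ℝ) * θ ^ 2 * B) := by
          rw [← Real.exp_nat_mul, ← Real.exp_add]
          congr 1
          ring
  have hexp_m : cm ≤ Real.exp (θ - θ * np + (n:ℝ) * θ ^ 2 * B) := by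
    have hpow : Mm ^ n ≤ Real.exp (-θ * meanMu1 q Z + θ ^ 2 * B) ^ n :=
      pow_le_pow_left₀ hMm0.le hMmle n
    calc cm ≤ Real.exp (-θ + θ * (meanMu1 q Z * n) - θ * np) *
          Real.exp (-θ * meanMu1 q Z + θ ^ 2 * B) ^ n := by
          rw [hcm]
          exact mul_le_mul_of_nonneg_left hpow (Real.exp_pos _).le
      _ = Real.exp (-θ - θ * np + (n:ℝ) * θ ^ 2 * B) := by
          rw [← Real.exp_nat_mul, ← Real.exp_add]
          congr 1
          ring
      _ ≤ Real.exp (θ - θ * np + (n:ℝ) * θ ^ 2 * B) := by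
          apply Real.exp_le_exp.mpr
          linarith
  -- final numeric estimate
  have hKt' : 2 * (2 + ε) ≤ ε * t := by
    rw [div_le_iff₀ hε0] at htK
    linarith
  have hfinal : cp + cm ≤ Real.exp (-t) := by
    have hX : θ - θ * np + (n:ℝ) * θ ^ 2 * B = θ - ε * t ^ 2 + ε ^ 2 * t ^ 2 * B := by
      rw [hθnp, hnθ2]
    have hXle : 1 + (θ - θ * np + (n:ℝ) * θ ^ 2 * B) ≤ -t := by
      rw [hX]
      have hA : ε ^ 2 * B ≤ ε / 2 := by
        calc ε ^ 2 * B = ε * (ε * B) := by ring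
          _ ≤ ε * (1 / 2) := mul_le_mul_of_nonneg_left hεB hε0.le
          _ = ε / 2 := by ring
      have h1 : ε ^ 2 * t ^ 2 * B ≤ ε / 2 * t ^ 2 := by
        calc ε ^ 2 * t ^ 2 * B = (ε ^ 2 * B) * t ^ 2 := by ring
          _ ≤ ε / 2 * t ^ 2 := mul_le_mul_of_nonneg_right hA (sq_nonneg t)
      have h2 : 2 * (2 + ε) * t ≤ ε * t ^ 2 := by
        calc 2 * (2 + ε) * t ≤ ε * t * t :=
              mul_le_mul_of_nonneg_right hKt' ht0.le
          _ = ε * t ^ 2 := by ring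
      have h3 : 2 + 2 * ε ≤ (2 + 2 * ε) * t :=
        le_mul_of_one_le_right (by linarith) ht1
      linarith only [h1, h2, h3, hθε, ht1]
    have h2e : (2:ℝ) ≤ Real.exp 1 := by
      have := Real.add_one_le_exp 1
      linarith
    calc cp + cm ≤ 2 * Real.exp (θ - θ * np + (n:ℝ) * θ ^ 2 * B) := by linarith
      _ ≤ Real.exp 1 * Real.exp (θ - θ * np + (n:ℝ) * θ ^ 2 * B) :=
          mul_le_mul_of_nonneg_right h2e (Real.exp_pos _).le
      _ = Real.exp (1 + (θ - θ * np + (n:ℝ) * θ ^ 2 * B)) := by rw [← Real.exp_add]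
      _ ≤ Real.exp (-t) := Real.exp_le_exp.mpr hXle
  exact le_trans hstep1 hfinal



end PaperWeill
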